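/- There exists n₀ such that for every integer n ≥ n₀, every prime Δ with n⁴/2 ≤ Δ ≤ n⁴, and every set V of fewer than n² {0,1}-vectors in (ZMod Δ)ⁿ with the property that for every integer k with √n ≤ k ≤ n and every subset W ⊆ V with |W| ≤ k/(22·log₂ k) the restrictions of the vectors of W to their last k coordinates are linearly independent over ZMod Δ, there exists a {0,1}-vector v ∈ (ZMod Δ)ⁿ not in V such that V ∪ {v} still has this property. -/

import Mathlib

/-- The restriction of a vector `v ∈ (ZMod Δ)ⁿ` to its last `k` coordinates
(coordinates `n-k, …, n-1`). -/
def lastCoords {α : Type*} (n k : ℕ) (hk : k ≤ n) (v : Fin n → α) : Fin k → α :=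
  fun i => v ⟨n - k + i.1, by omega⟩

/-- The property of a set `V` of vectors in `(ZMod Δ)ⁿ`: for every `√n ≤ k ≤ n`,
any subset of at most `k/(22·log₂ k)` vectors of `V` restricted to the last `k`
coordinates is linearly independent over `ZMod Δ`. -/
def goodSet (n Δ : ℕ) (V : Finset (Fin n → ZMod Δ)) : Prop :=
  ∀ k : ℕ, Real.sqrt n ≤ (k : ℝ) → ∀ hk : k ≤ n,
    ∀ W ⊆ V, (W.card : ℝ) ≤ (k : ℝ) / (22 * Real.logb 2 k) →
      LinearIndependent (ZMod Δ) (fun w : W => lastCoords n k hk w.1)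

section Aux
open Finset

/-- The `{0,1}`-cube as a finset. -/
noncomputable def cubeF (n Δ : ℕ) : Finset (Fin n → ZMod Δ) :=
  Fintype.piFinset (fun _ : Fin n => ({0, 1} : Finset (ZMod Δ)))

lemma mem_cubeF {n Δ : ℕ} {v : Fin n → ZMod Δ} :
    v ∈ cubeF n Δ ↔ ∀ i, v i = 0 ∨ v i = 1 := by
  simp [cubeF, Fintype.mem_piFinset]

lemma card_cubeF {n Δ : ℕ} (h : (2:ℕ) ≤ Δ) [NeZero Δ] : (cubeF n Δ).card = 2 ^ n := by
  haveI : Fact (1 < Δ) := ⟨by omega⟩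
  have h01 : (0 : ZMod Δ) ≠ 1 := fun h0 => one_ne_zero (α := ZMod Δ) h0.symm
  have : ({0, 1} : Finset (ZMod Δ)).card = 2 := by
    rw [Finset.card_insert_of_notMem (by simpa using h01), Finset.card_singleton]
  simp [cubeF, Fintype.card_piFinset, this]

/-- Counting `{0,1}`-vectors whose last-`k` restriction lies in the span of the
restrictions of the vectors of `W'`. -/
lemma card_span_subset {n Δ k : ℕ} [NeZero Δ] (h2 : 2 ≤ Δ) (hk : k ≤ n)
    (W' : Finset (Fin n → ZMod Δ)) (S : Finset (Fin n → ZMod Δ))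
    (hS : ∀ v ∈ S, (∀ i, v i = 0 ∨ v i = 1) ∧ lastCoords n k hk v ∈
        Submodule.span (ZMod Δ) (Set.range fun w : ↥W' => lastCoords n k hk w.1)) :
    S.card ≤ Δ ^ W'.card * 2 ^ (n - k) := by
  classical
  set π := lastCoords n k hk with hπ
  set spanIm : Finset (Fin k → ZMod Δ) :=
    Finset.image (fun c : (↥W' → ZMod Δ) => ∑ w, c w • π w.1) Finset.univ with hspanIm
  have key : ∀ v ∈ S,
      (π v, fun j : Fin (n - k) => v ⟨j.1, by omega⟩) ∈ spanIm ×ˢ cubeF (n - k) Δ := by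
    intro v hv
    obtain ⟨hvc, hvs⟩ := hS v hv
    rw [Submodule.mem_span_range_iff_exists_fun] at hvs
    obtain ⟨c, hc⟩ := hvs
    refine Finset.mem_product.2 ⟨?_, ?_⟩
    · exact Finset.mem_image.2 ⟨c, Finset.mem_univ _, hc⟩
    · rw [mem_cubeF]; intro j; exact hvc _
  have inj : Set.InjOn (fun v => (π v, fun j : Fin (n - k) => v ⟨j.1, by omega⟩))
      (S : Set _) := by
    intro v₁ h₁ v₂ h₂ h
    have h1 := congrArg Prod.fst h
    have h2' := congrArg Prod.snd h
    simp only at h1 h2'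
    funext i
    by_cases hi : i.1 < n - k
    · exact congrFun h2' ⟨i.1, hi⟩
    · have : i.1 - (n - k) < k := by omega
      have := congrFun h1 ⟨i.1 - (n - k), this⟩
      simp only [hπ, lastCoords] at this
      convert this using 2 <;> · apply Fin.ext; simp; omega
  calc S.card ≤ (spanIm ×ˢ cubeF (n - k) Δ).card :=
        Finset.card_le_card_of_injOn _ key inj
    _ = spanIm.card * (cubeF (n - k) Δ).card := Finset.card_product _ _
    _ ≤ Δ ^ W'.card * 2 ^ (n - k) := by
        refine Nat.mul_le_mul ?_ (le_of_eq (card_cubeF h2))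
        calc spanIm.card ≤ (Finset.univ : Finset (↥W' → ZMod Δ)).card :=
              Finset.card_image_le
          _ = Δ ^ W'.card := by
              rw [Finset.card_univ, Fintype.card_fun, ZMod.card, Fintype.card_coe]

/-- If adding `v` to a good set destroys goodness, then some restriction of `v` lies
in the span of the restrictions of few vectors of `V`. -/
lemma bad_witness {n Δ : ℕ} [Fact (Nat.Prime Δ)] {V : Finset (Fin n → ZMod Δ)}
    (hV : goodSet n Δ V) {v : Fin n → ZMod Δ}
    (hfail : ¬ goodSet n Δ (insert v V)) :
    ∃ k : ℕ, ∃ hk : k ≤ n, Real.sqrt n ≤ (k : ℝ) ∧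
      ∃ W' ⊆ V, ((W'.card : ℝ) + 1 ≤ (k : ℝ) / (22 * Real.logb 2 k)) ∧
        lastCoords n k hk v ∈
          Submodule.span (ZMod Δ) (Set.range fun w : ↥W' => lastCoords n k hk w.1) := by
  classical
  unfold goodSet at hfail
  push_neg at hfail
  obtain ⟨k, hsq, hk, W, hWsub, hWcard, hdep⟩ := hfail
  set π := lastCoords n k hk with hπ
  by_cases hvW : v ∈ W
  case neg =>
    exact absurd (hV k hsq hk W (fun x hx => by
      rcases Finset.mem_insert.1 (hWsub hx) with h | h
      · exact absurd (h ▸ hx) hvW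
      · exact h) hWcard) hdep
  set W' := W.erase v with hW'
  have hW'sub : W' ⊆ V := by
    intro x hx
    have hxW := Finset.mem_of_mem_erase hx
    rcases Finset.mem_insert.1 (hWsub hxW) with h | h
    · exact absurd hx (by rw [h]; exact Finset.notMem_erase _ _)
    · exact h
  have hvW' : v ∉ W' := Finset.notMem_erase _ _
  have hWeq : W = insert v W' := (Finset.insert_erase hvW).symm
  have hcard' : W'.card + 1 = W.card := by
    rw [hWeq, Finset.card_insert_of_notMem hvW']
  refine ⟨k, hk, hsq, W', hW'sub, ?_, ?_⟩
  · rw [show ((W'.card : ℝ) + 1) = ((W'.card + 1 : ℕ) : ℝ) by push_cast; ring, hcard']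
    exact hWcard
  rw [Fintype.not_linearIndependent_iff] at hdep
  obtain ⟨g, hgsum, i, hgi⟩ := hdep
  set G : (Fin n → ZMod Δ) → ZMod Δ := fun x => if h : x ∈ W then g ⟨x, h⟩ else 0 with hG
  have hsum : ∑ x ∈ W, G x • π x = 0 := by
    rw [← hgsum, ← Finset.sum_coe_sort W (fun x => G x • π x)]
    exact Finset.sum_congr rfl (fun w _ => by rw [hG]; simp [dif_pos w.2])
  have hsplit : G v • π v + ∑ x ∈ W', G x • π x = 0 := by
    rw [← hsum, hWeq, Finset.sum_insert hvW']
  by_cases ha : G v = 0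
  case pos =>
    exfalso
    have hdep' : ¬ LinearIndependent (ZMod Δ) (fun w : ↥W' => π w.1) := by
      rw [Fintype.not_linearIndependent_iff]
      refine ⟨fun w => G w.1, ?_, ?_⟩
      · rw [Finset.sum_coe_sort W' (fun x => G x • π x)]
        have := hsplit
        rw [ha, zero_smul, zero_add] at this
        exact this
      · have hiW' : i.1 ∈ W' := by
          rw [hW', Finset.mem_erase]
          refine ⟨?_, i.2⟩
          intro h
          apply hgi
          have : G i.1 = g i := by rw [hG]; simp [dif_pos i.2]
          rw [← this, h, ha]
        refine ⟨⟨i.1, hiW'⟩, ?_⟩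
        show G i.1 ≠ 0
        have : G i.1 = g i := by rw [hG]; simp [dif_pos i.2]
        rw [this]; exact hgi
    exact hdep' (hV k hsq hk W' hW'sub (by
      calc (W'.card : ℝ) ≤ W.card := by exact_mod_cast Nat.le_of_lt_succ (by omega)
        _ ≤ _ := hWcard))
  case neg =>
    rw [Submodule.mem_span_range_iff_exists_fun]
    refine ⟨fun w => -(G v)⁻¹ * G w.1, ?_⟩
    rw [Finset.sum_coe_sort W' (fun x => (-(G v)⁻¹ * G x) • π x)]
    have : ∑ x ∈ W', (-(G v)⁻¹ * G x) • π x = -(G v)⁻¹ • ∑ x ∈ W', G x • π x := by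
      rw [Finset.smul_sum]
      exact Finset.sum_congr rfl (fun x _ => by rw [smul_smul])
    rw [this]
    have h2 : ∑ x ∈ W', G x • π x = -(G v • π v) := by
      linear_combination (norm := module) hsplit
    rw [h2]
    rw [smul_neg, neg_smul, neg_neg, smul_smul, inv_mul_cancel₀ ha, one_smul]

/-- Counting subsets of bounded cardinality. -/
lemma card_powerset_filter {α : Type*} [DecidableEq α] (V : Finset α) (m : ℕ)
    (p : Finset α → Prop) [DecidablePred p] (hp : ∀ W, p W → W.card ≤ m) :
    (V.powerset.filter p).card ≤ (m + 1) * (V.card + 1) ^ m := by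
  have hsub : V.powerset.filter p ⊆ (Finset.range (m+1)).biUnion (fun s => V.powersetCard s) := by
    intro W hW
    rw [Finset.mem_filter, Finset.mem_powerset] at hW
    exact Finset.mem_biUnion.2 ⟨W.card, Finset.mem_range.2 (Nat.lt_succ_of_le (hp W hW.2)),
      Finset.mem_powersetCard.2 ⟨hW.1, rfl⟩⟩
  calc (V.powerset.filter p).card ≤ _ := Finset.card_le_card hsub
    _ ≤ ∑ s ∈ Finset.range (m+1), (V.powersetCard s).card := Finset.card_biUnion_le
    _ ≤ ∑ s ∈ Finset.range (m+1), (V.card + 1) ^ m := by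
        refine Finset.sum_le_sum (fun s hs => ?_)
        rw [Finset.card_powersetCard]
        calc V.card.choose s ≤ V.card ^ s := Nat.choose_le_pow _ _
          _ ≤ (V.card + 1) ^ s := Nat.pow_le_pow_left (by omega) _
          _ ≤ (V.card + 1) ^ m := Nat.pow_le_pow_right (by omega)
              (Nat.le_of_lt_succ (Finset.mem_range.1 hs))
    _ = (m + 1) * (V.card + 1) ^ m := by rw [Finset.sum_const, Finset.card_range, smul_eq_mul]

lemma two_sq_lt : ∀ n : ℕ, 8 ≤ n → 2 * n ^ 2 < 2 ^ n := by
  intro n hn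
  induction n, hn using Nat.le_induction with
  | base => norm_num
  | succ n hn ih =>
      have h1 : 2 * (n + 1) ^ 2 ≤ 2 * (2 * n ^ 2) := by nlinarith
      calc 2 * (n+1)^2 ≤ 2 * (2 * n^2) := h1
        _ < 2 * 2 ^ n := by omega
        _ = 2 ^ (n+1) := by ring

lemma eventual_facts : ∀ᶠ n : ℕ in Filter.atTop,
    16 ≤ n ∧ 2 * (n:ℝ)^2 < 2^(n:ℕ) ∧ 2 * ((n:ℝ)+1)^2 ≤ (2:ℝ) ^ ((5/11) * Real.sqrt n) := by
  have hlog : ∀ᶠ x : ℝ in Filter.atTop, ‖Real.log x‖ ≤ (Real.log 2 / 100) * ‖x ^ ((1:ℝ)/2)‖ := by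
    have := isLittleO_log_rpow_atTop (by norm_num : (0:ℝ) < 1/2)
    exact this.def (by positivity)
  have hnat := tendsto_natCast_atTop_atTop (R := ℝ) |>.eventually hlog
  filter_upwards [hnat, Filter.eventually_ge_atTop 16] with n hlogn hn16
  refine ⟨hn16, by exact_mod_cast two_sq_lt n (by omega), ?_⟩
  have hn1 : (1:ℝ) ≤ (n:ℝ) := by exact_mod_cast (by omega : 1 ≤ n)
  have hnpos : (0:ℝ) < n := by linarith
  have hs : Real.sqrt n = (n:ℝ) ^ ((1:ℝ)/2) := by
    rw [Real.sqrt_eq_rpow]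
  have hlog' : Real.log n ≤ (Real.log 2 / 100) * Real.sqrt n := by
    have h1 : ‖Real.log (n:ℝ)‖ = Real.log n := Real.norm_of_nonneg (Real.log_nonneg hn1)
    have h2 : ‖(n:ℝ) ^ ((1:ℝ)/2)‖ = (n:ℝ) ^ ((1:ℝ)/2) :=
      Real.norm_of_nonneg (Real.rpow_nonneg (le_of_lt hnpos) _)
    rw [h1, h2] at hlogn
    rw [hs]; exact hlogn
  have hlb : Real.logb 2 n ≤ Real.sqrt n / 100 := by
    rw [Real.logb, div_le_iff₀' (Real.log_pos (by norm_num))]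
    · calc Real.log n ≤ (Real.log 2 / 100) * Real.sqrt n := hlog'
        _ = Real.log 2 * (Real.sqrt n / 100) := by ring
  have hb1 : 2 * ((n:ℝ)+1)^2 ≤ (n:ℝ)^4 := by
    have h16 : (16:ℝ) ≤ n := by exact_mod_cast hn16
    nlinarith [sq_nonneg ((n:ℝ) - 4), sq_nonneg ((n:ℝ)^2 - 4*n)]
  have hb2 : (n:ℝ)^4 = (2:ℝ) ^ ((4:ℝ) * Real.logb 2 n) := by
    rw [mul_comm, Real.rpow_mul (by norm_num), Real.rpow_logb (by norm_num) (by norm_num) hnpos]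
    rw [← Real.rpow_natCast]; norm_num
  have hb3 : (4:ℝ) * Real.logb 2 n ≤ (5/11) * Real.sqrt n := by
    have hsq : (0:ℝ) ≤ Real.sqrt n := Real.sqrt_nonneg _
    nlinarith [hlb]
  calc 2 * ((n:ℝ)+1)^2 ≤ (n:ℝ)^4 := hb1
    _ = (2:ℝ) ^ ((4:ℝ) * Real.logb 2 n) := hb2
    _ ≤ (2:ℝ) ^ ((5/11) * Real.sqrt n) :=
        Real.rpow_le_rpow_of_exponent_le (by norm_num) hb3

lemma inner_bound {n Δ k m : ℕ} (hn : 16 ≤ n) (hk : k ≤ n)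
    (hsq : Real.sqrt n ≤ (k:ℝ)) (hm : (m:ℝ) ≤ (k:ℝ) / (22 * Real.logb 2 k))
    (hΔ : (Δ:ℝ) ≤ (n:ℝ)^4) :
    ((m:ℝ)+1) * ((n:ℝ)^2)^m * ((Δ:ℝ)^m * (2:ℝ)^(n-k : ℕ))
      ≤ ((n:ℝ)+1) * (2:ℝ)^((n:ℝ) - (5/11) * Real.sqrt n) := by
  have h16 : (16:ℝ) ≤ n := by exact_mod_cast hn
  have hnpos : (0:ℝ) < n := by linarith
  have h4 : (4:ℝ) ≤ (k:ℝ) := by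
    calc (4:ℝ) = Real.sqrt 16 := by
          rw [show (16:ℝ) = 4^2 by norm_num, Real.sqrt_sq (by norm_num)]
      _ ≤ Real.sqrt n := Real.sqrt_le_sqrt (by exact_mod_cast hn)
      _ ≤ k := hsq
  have hkpos : (0:ℝ) < k := by linarith
  set L := Real.logb 2 k with hL
  have hL2 : (2:ℝ) ≤ L := by
    have h44 : Real.logb 2 4 = 2 := by
      rw [show (4:ℝ) = 2^(2:ℕ) by norm_num, Real.logb_pow, Real.logb_self_eq_one] <;> norm_num
    calc (2:ℝ) = Real.logb 2 4 := h44.symm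
      _ ≤ L := Real.logb_le_logb_of_le (by norm_num) (by norm_num) h4
  have hLpos : (0:ℝ) < L := by linarith
  have hlogn : Real.logb 2 n ≤ 2 * L := by
    have hnk2 : (n:ℝ) ≤ (k:ℝ)^2 := by
      have h1 : Real.sqrt n ^ 2 = (n:ℝ) := Real.sq_sqrt (le_of_lt hnpos)
      calc (n:ℝ) = Real.sqrt n ^ 2 := h1.symm
        _ ≤ (k:ℝ)^2 := by
            apply pow_le_pow_left₀ (Real.sqrt_nonneg _) hsq
    calc Real.logb 2 n ≤ Real.logb 2 ((k:ℝ)^2) :=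
          Real.logb_le_logb_of_le (by norm_num) hnpos hnk2
      _ = 2 * L := by rw [Real.logb_pow]; push_cast; ring
  have hmk : (m:ℝ) ≤ (k:ℝ) := by
    calc (m:ℝ) ≤ (k:ℝ) / (22 * L) := hm
      _ ≤ (k:ℝ) := div_le_self (le_of_lt hkpos) (by linarith)
  have step1 : ((n:ℝ)^2)^m * (Δ:ℝ)^m ≤ (n:ℝ)^(6*m) := by
    calc ((n:ℝ)^2)^m * (Δ:ℝ)^m = ((n:ℝ)^2 * Δ)^m := (mul_pow _ _ _).symm
      _ ≤ ((n:ℝ)^6)^m := by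
          apply pow_le_pow_left₀ (by positivity)
          calc (n:ℝ)^2 * Δ ≤ (n:ℝ)^2 * (n:ℝ)^4 := by
                apply mul_le_mul_of_nonneg_left hΔ (by positivity)
            _ = (n:ℝ)^6 := by ring
      _ = (n:ℝ)^(6*m) := by rw [← pow_mul]
  have step2 : (n:ℝ)^(6*m) ≤ (2:ℝ) ^ ((6/11) * (k:ℝ)) := by
    have hrw : (n:ℝ)^(6*m) = (2:ℝ) ^ (Real.logb 2 n * (6*m : ℕ)) := by
      rw [Real.rpow_mul (by norm_num), Real.rpow_logb (by norm_num) (by norm_num) hnpos,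
        Real.rpow_natCast]
    rw [hrw]
    apply Real.rpow_le_rpow_of_exponent_le (by norm_num)
    have hlogn0 : 0 ≤ Real.logb 2 n := by
      apply Real.logb_nonneg (by norm_num)
      linarith
    have hm0 : (0:ℝ) ≤ m := Nat.cast_nonneg _
    calc Real.logb 2 n * (6*m : ℕ) = (6 : ℝ) * m * Real.logb 2 n := by push_cast; ring
      _ ≤ 6 * ((k:ℝ) / (22 * L)) * (2 * L) := by
          apply mul_le_mul
          · apply mul_le_mul_of_nonneg_left hm (by norm_num)
          · exact hlogn
          · exact hlogn0
          · positivity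
      _ = (6/11) * k := by field_simp; ring
  have step3 : (2:ℝ)^(n-k : ℕ) = (2:ℝ) ^ ((n:ℝ) - (k:ℝ)) := by
    rw [← Real.rpow_natCast 2 (n-k), Nat.cast_sub hk]
  have hm1 : (m:ℝ)+1 ≤ (n:ℝ)+1 := by
    have : (k:ℝ) ≤ n := by exact_mod_cast hk
    linarith
  calc ((m:ℝ)+1) * ((n:ℝ)^2)^m * ((Δ:ℝ)^m * (2:ℝ)^(n-k : ℕ))
      = ((m:ℝ)+1) * (((n:ℝ)^2)^m * (Δ:ℝ)^m) * (2:ℝ)^(n-k : ℕ) := by ring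
    _ ≤ ((n:ℝ)+1) * ((2:ℝ) ^ ((6/11) * (k:ℝ))) * (2:ℝ) ^ ((n:ℝ) - (k:ℝ)) := by
        rw [step3]
        apply mul_le_mul_of_nonneg_right ?_ (by positivity)
        apply mul_le_mul hm1 (step1.trans step2) (by positivity) (by linarith)
    _ = ((n:ℝ)+1) * (2:ℝ) ^ ((n:ℝ) - (5/11) * (k:ℝ)) := by
        rw [mul_assoc, ← Real.rpow_add (by norm_num)]
        ring_nf
    _ ≤ ((n:ℝ)+1) * (2:ℝ) ^ ((n:ℝ) - (5/11) * Real.sqrt n) := by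
        apply mul_le_mul_of_nonneg_left ?_ (by linarith)
        apply Real.rpow_le_rpow_of_exponent_le (by norm_num)
        nlinarith [Real.sqrt_nonneg (n:ℝ)]

end Aux

theorem stmt1 :
    ∃ n₀ : ℕ, ∀ n : ℕ, n₀ ≤ n → ∀ Δ : ℕ, Δ.Prime →
      (n : ℝ)^4 / 2 ≤ (Δ : ℝ) → (Δ : ℝ) ≤ (n : ℝ)^4 →
      ∀ V : Finset (Fin n → ZMod Δ),
        V.card < n^2 →
        (∀ v ∈ V, ∀ i, v i = 0 ∨ v i = 1) →
        goodSet n Δ V →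
        ∃ v : Fin n → ZMod Δ, v ∉ V ∧ (∀ i, v i = 0 ∨ v i = 1) ∧
          goodSet n Δ (insert v V) := by
  classical
  obtain ⟨n₀, hn₀⟩ := Filter.eventually_atTop.1 eventual_facts
  refine ⟨n₀, fun n hn Δ hΔp hΔlow hΔhigh V hVcard hV01 hVgood => ?_⟩
  obtain ⟨hn16, hsq2, hcond2⟩ := hn₀ n hn
  haveI : Fact (Nat.Prime Δ) := ⟨hΔp⟩
  haveI : NeZero Δ := ⟨hΔp.ne_zero⟩
  have hΔ2 : 2 ≤ Δ := hΔp.two_le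
  -- the bad sets
  set badk : ℕ → Finset (Fin n → ZMod Δ) := fun k =>
    if hk : k ≤ n then
      ((V.powerset.filter (fun W' => Real.sqrt n ≤ (k:ℝ) ∧
          ((W'.card:ℝ) + 1 ≤ (k:ℝ) / (22 * Real.logb 2 k)))).biUnion
        (fun W' => (cubeF n Δ).filter (fun v => lastCoords n k hk v ∈
          Submodule.span (ZMod Δ) (Set.range fun w : ↥W' => lastCoords n k hk w.1))))
    else ∅ with hbadk
  set Bad : Finset (Fin n → ZMod Δ) := V ∪ (Finset.range (n+1)).biUnion badk with hBadDef
  -- covering property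
  have cover : ∀ v ∈ cubeF n Δ, v ∉ Bad → v ∉ V ∧ goodSet n Δ (insert v V) := by
    intro v hv hvB
    have hvV : v ∉ V := fun h => hvB (Finset.mem_union_left _ h)
    refine ⟨hvV, ?_⟩
    by_contra hfail
    obtain ⟨k, hk, hsq, W', hW'sub, hWc, hmem⟩ := bad_witness hVgood hfail
    apply hvB
    apply Finset.mem_union_right
    refine Finset.mem_biUnion.2 ⟨k, Finset.mem_range.2 (by omega), ?_⟩
    rw [hbadk]
    simp only [dif_pos hk]
    refine Finset.mem_biUnion.2 ⟨W', Finset.mem_filter.2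
      ⟨Finset.mem_powerset.2 hW'sub, hsq, hWc⟩, Finset.mem_filter.2 ⟨hv, hmem⟩⟩
  -- the counting bound per k
  have count_k : ∀ k ∈ Finset.range (n+1),
      ((badk k).card : ℝ) ≤ ((n:ℝ)+1) * (2:ℝ)^((n:ℝ) - (5/11) * Real.sqrt n) := by
    intro k hkr
    have hk : k ≤ n := by
      have := Finset.mem_range.1 hkr; omega
    set F := V.powerset.filter (fun W' => Real.sqrt n ≤ (k:ℝ) ∧
        ((W'.card:ℝ) + 1 ≤ (k:ℝ) / (22 * Real.logb 2 k))) with hF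
    have hbk : badk k = F.biUnion
        (fun W' => (cubeF n Δ).filter (fun v => lastCoords n k hk v ∈
          Submodule.span (ZMod Δ) (Set.range fun w : ↥W' => lastCoords n k hk w.1))) := by
      rw [hbadk]; simp only [dif_pos hk]; rfl
    rcases F.eq_empty_or_nonempty with hFe | hFne
    · rw [hbk, hFe, Finset.biUnion_empty]
      simp only [Finset.card_empty, Nat.cast_zero]
      positivity
    · obtain ⟨W₀, hW₀⟩ := hFne
      obtain ⟨-, hsq, hW₀c⟩ := Finset.mem_filter.1 hW₀
      -- basic facts about k
      have h16 : (16:ℝ) ≤ n := by exact_mod_cast hn16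
      have h4 : (4:ℝ) ≤ (k:ℝ) := by
        calc (4:ℝ) = Real.sqrt 16 := by
              rw [show (16:ℝ) = 4^2 by norm_num, Real.sqrt_sq (by norm_num)]
          _ ≤ Real.sqrt n := Real.sqrt_le_sqrt (by exact_mod_cast hn16)
          _ ≤ k := hsq
      have hL2 : (2:ℝ) ≤ Real.logb 2 k := by
        have h44 : Real.logb 2 4 = 2 := by
          rw [show (4:ℝ) = 2^(2:ℕ) by norm_num, Real.logb_pow, Real.logb_self_eq_one] <;>
            norm_num
        calc (2:ℝ) = Real.logb 2 4 := h44.symm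
          _ ≤ _ := Real.logb_le_logb_of_le (by norm_num) (by norm_num) h4
      have hbound0 : (0:ℝ) ≤ (k:ℝ) / (22 * Real.logb 2 k) := by positivity
      set m : ℕ := ⌊(k:ℝ) / (22 * Real.logb 2 k)⌋₊ with hmdef
      have hmle : (m:ℝ) ≤ (k:ℝ) / (22 * Real.logb 2 k) := Nat.floor_le hbound0
      have hcards : ∀ W' : Finset (Fin n → ZMod Δ), (Real.sqrt n ≤ (k:ℝ) ∧
          ((W'.card:ℝ) + 1 ≤ (k:ℝ) / (22 * Real.logb 2 k))) → W'.card ≤ m := by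
        intro W' hW'
        have h1 : W'.card + 1 ≤ m := Nat.le_floor (by push_cast; linarith [hW'.2])
        omega
      -- nat bound on the card
      have hnat : (badk k).card ≤ (m + 1) * (V.card + 1) ^ m * (Δ ^ m * 2 ^ (n - k)) := by
        rw [hbk]
        calc (F.biUnion _).card ≤ ∑ W' ∈ F, ((cubeF n Δ).filter (fun v =>
              lastCoords n k hk v ∈ Submodule.span (ZMod Δ)
                (Set.range fun w : ↥W' => lastCoords n k hk w.1))).card :=
              Finset.card_biUnion_le
          _ ≤ ∑ _W' ∈ F, Δ ^ m * 2 ^ (n - k) := by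
              refine Finset.sum_le_sum (fun W' hW' => ?_)
              have h1 := card_span_subset hΔ2 hk W'
                ((cubeF n Δ).filter (fun v => lastCoords n k hk v ∈
                  Submodule.span (ZMod Δ) (Set.range fun w : ↥W' => lastCoords n k hk w.1)))
                (fun v hv => by
                  obtain ⟨h1, h2⟩ := Finset.mem_filter.1 hv
                  exact ⟨mem_cubeF.1 h1, h2⟩)
              refine h1.trans (Nat.mul_le_mul_right _ (Nat.pow_le_pow_right (by omega) ?_))
              exact hcards W' (Finset.mem_filter.1 hW').2
          _ = F.card * (Δ ^ m * 2 ^ (n - k)) := by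
              rw [Finset.sum_const, smul_eq_mul]
          _ ≤ (m + 1) * (V.card + 1) ^ m * (Δ ^ m * 2 ^ (n - k)) := by
              refine Nat.mul_le_mul_right _ ?_
              exact card_powerset_filter V m _ hcards
      -- move to ℝ
      have hVn : ((V.card:ℝ) + 1) ≤ (n:ℝ)^2 := by
        have : V.card + 1 ≤ n^2 := hVcard
        calc ((V.card:ℝ) + 1) = ((V.card + 1 : ℕ) : ℝ) := by push_cast; ring
          _ ≤ ((n^2 : ℕ) : ℝ) := by exact_mod_cast this
          _ = (n:ℝ)^2 := by push_cast; ring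
      calc ((badk k).card : ℝ)
          ≤ ((m:ℝ) + 1) * ((V.card:ℝ) + 1) ^ m * ((Δ:ℝ) ^ m * (2:ℝ) ^ (n - k : ℕ)) := by
            exact_mod_cast hnat
        _ ≤ ((m:ℝ) + 1) * ((n:ℝ)^2) ^ m * ((Δ:ℝ) ^ m * (2:ℝ) ^ (n - k : ℕ)) := by
            apply mul_le_mul_of_nonneg_right ?_ (by positivity)
            apply mul_le_mul_of_nonneg_left ?_ (by positivity)
            exact pow_le_pow_left₀ (by positivity) hVn m
        _ ≤ ((n:ℝ)+1) * (2:ℝ)^((n:ℝ) - (5/11) * Real.sqrt n) :=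
            inner_bound hn16 hk hsq hmle hΔhigh
  -- total count
  have hBadlt : (Bad.card : ℝ) < (2:ℝ) ^ (n : ℕ) := by
    have h1 : Bad.card ≤ V.card + ∑ k ∈ Finset.range (n+1), (badk k).card := by
      rw [hBadDef]
      exact (Finset.card_union_le _ _).trans (by
        exact Nat.add_le_add_left Finset.card_biUnion_le _)
    have h2 : ((∑ k ∈ Finset.range (n+1), (badk k).card : ℕ) : ℝ)
        ≤ ((n:ℝ)+1) * (((n:ℝ)+1) * (2:ℝ)^((n:ℝ) - (5/11) * Real.sqrt n)) := by
      push_cast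
      calc ∑ k ∈ Finset.range (n+1), ((badk k).card : ℝ)
          ≤ ∑ _k ∈ Finset.range (n+1), ((n:ℝ)+1) * (2:ℝ)^((n:ℝ) - (5/11) * Real.sqrt n) :=
            Finset.sum_le_sum count_k
        _ = ((n+1 : ℕ):ℝ) * (((n:ℝ)+1) * (2:ℝ)^((n:ℝ) - (5/11) * Real.sqrt n)) := by
            rw [Finset.sum_const, Finset.card_range, nsmul_eq_mul]
        _ = ((n:ℝ)+1) * (((n:ℝ)+1) * (2:ℝ)^((n:ℝ) - (5/11) * Real.sqrt n)) := by
            push_cast; ring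
    have hVreal : ((V.card:ℕ):ℝ) ≤ (n:ℝ)^2 := by
      calc ((V.card:ℕ):ℝ) ≤ ((n^2:ℕ):ℝ) := by exact_mod_cast le_of_lt hVcard
        _ = (n:ℝ)^2 := by push_cast; ring
    have key : ((n:ℝ)+1) * (((n:ℝ)+1) * (2:ℝ)^((n:ℝ) - (5/11) * Real.sqrt n))
        ≤ (2:ℝ)^(n:ℕ) / 2 := by
      have hsplit : (2:ℝ)^((n:ℝ) - (5/11) * Real.sqrt n)
          = (2:ℝ)^(n:ℕ) / (2:ℝ)^((5/11) * Real.sqrt n) := by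
        rw [Real.rpow_sub (by norm_num), Real.rpow_natCast]
      rw [hsplit]
      have hpow_pos : (0:ℝ) < (2:ℝ)^((5/11) * Real.sqrt n) := Real.rpow_pos_of_pos (by norm_num) _
      have h2n_pos : (0:ℝ) < (2:ℝ)^(n:ℕ) := by positivity
      have heq : ((n:ℝ)+1) * (((n:ℝ)+1) * ((2:ℝ)^(n:ℕ) / (2:ℝ)^((5/11) * Real.sqrt n)))
          = (((n:ℝ)+1)^2 * (2:ℝ)^(n:ℕ)) / (2:ℝ)^((5/11) * Real.sqrt n) := by ring
      rw [heq, div_le_div_iff₀ hpow_pos (by norm_num)]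
      calc ((n:ℝ)+1)^2 * (2:ℝ)^(n:ℕ) * 2 = (2 * ((n:ℝ)+1)^2) * (2:ℝ)^(n:ℕ) := by ring
        _ ≤ (2:ℝ)^((5/11) * Real.sqrt n) * (2:ℝ)^(n:ℕ) :=
            mul_le_mul_of_nonneg_right hcond2 h2n_pos.le
        _ = (2:ℝ)^(n:ℕ) * (2:ℝ)^((5/11) * Real.sqrt n) := mul_comm _ _
    calc (Bad.card : ℝ) ≤ ((V.card + ∑ k ∈ Finset.range (n+1), (badk k).card : ℕ) : ℝ) := by
          exact_mod_cast h1
      _ = ((V.card : ℕ):ℝ) + ((∑ k ∈ Finset.range (n+1), (badk k).card : ℕ) : ℝ) := by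
          push_cast; ring
      _ ≤ (n:ℝ)^2 + (2:ℝ)^(n:ℕ) / 2 := add_le_add hVreal (h2.trans key)
      _ < (2:ℝ)^(n:ℕ) := by linarith [hsq2]
  -- conclude
  have hcube : (cubeF n Δ).card = 2^n := card_cubeF hΔ2
  have hlt : Bad.card < (cubeF n Δ).card := by
    rw [hcube]
    have : (Bad.card : ℝ) < ((2^n : ℕ) : ℝ) := by push_cast; exact hBadlt
    exact_mod_cast this
  have hns : ¬ (cubeF n Δ ⊆ Bad) := fun hsub => absurd (Finset.card_le_card hsub) (by omega)
  obtain ⟨v, hvc, hvB⟩ := Finset.not_subset.1 hns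
  obtain ⟨hvV, hgood⟩ := cover v hvc hvB
  exact ⟨v, hvV, mem_cubeF.1 hvc, hgood⟩
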